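/- Let K be a number field with ring of integers O_K, let p be an odd prime, and let (a, b, c) ∈ O_K³ be a non-trivial solution of a^p + b^p + c^p = 0. Let 𝔮 be a prime ideal of O_K not dividing 2 which divides exactly one of a, b, c. Then the j-invariant j of the Frey curve E: Y² = X(X − a^p)(X + b^p) satisfies ord_𝔮(j) = −2p·ord_𝔮(abc) < 0; in particular p divides ord_𝔮(j). -/

import Mathlib

open NumberField IsDedekindDomain
open scoped Multiplicative
local notation "ℤₘ₀" => WithZero (Multiplicative ℤ)

open scoped Classical in
/-- The normalized `q`-adic valuation `ord_q : K → ℤ ∪ {+∞}` on the fraction field `K`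
of a Dedekind domain `R`, attached to a non-zero prime `q` of `R`; `ord_q (0) = +∞`. -/
noncomputable def ordAt {R : Type*} [CommRing R] [IsDedekindDomain R] {K : Type*} [Field K]
    [Algebra R K] [IsFractionRing R K] (q : HeightOneSpectrum R) (x : K) : WithTop ℤ :=
  if hx : x = 0 then ⊤
  else ((-Multiplicative.toAdd (WithZero.unzero (((q.valuation K).ne_zero_iff).mpr hx)) : ℤ) : WithTop ℤ)

open IsDedekindDomain.HeightOneSpectrum in
lemma ordAt_eq_of_valuation {R : Type*} [CommRing R] [IsDedekindDomain R] {K : Type*} [Field K]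
    [Algebra R K] [IsFractionRing R K] (q : HeightOneSpectrum R) {x : K} (hx : x ≠ 0) {n : ℤ}
    (h : q.valuation K x = ((Multiplicative.ofAdd (-n) : Multiplicative ℤ) : ℤₘ₀)) :
    ordAt q x = (n : WithTop ℤ) := by
  classical
  rw [ordAt, dif_neg hx]
  have hu : WithZero.unzero (((q.valuation K).ne_zero_iff).mpr hx) =
      Multiplicative.ofAdd (-n) := by
    apply WithZero.coe_inj.mp
    rw [WithZero.coe_unzero, h]
  rw [hu]
  simp

open IsDedekindDomain.HeightOneSpectrum in
lemma intValuation_eq_one_of_not_mem {R : Type*} [CommRing R] [IsDedekindDomain R]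
    (q : HeightOneSpectrum R) {r : R} (hr : r ∉ q.asIdeal) :
    q.intValuation r = 1 := by
  have h1 : q.intValuation r ≤ 1 := q.intValuation_le_one r
  have h2 : ¬ q.intValuation r < 1 := by
    rw [q.intValuation_lt_one_iff_dvd, Ideal.dvd_span_singleton]
    exact hr
  exact le_antisymm h1 (not_lt.mp h2)

open IsDedekindDomain.HeightOneSpectrum in
lemma exists_intValuation_eq_of_mem {R : Type*} [CommRing R] [IsDedekindDomain R]
    (q : HeightOneSpectrum R) {r : R} (hr0 : r ≠ 0) (hr : r ∈ q.asIdeal) :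
    ∃ n : ℕ, 1 ≤ n ∧ q.intValuation r =
      ((Multiplicative.ofAdd (-(n : ℤ)) : Multiplicative ℤ) : ℤₘ₀) := by
  obtain ⟨n, hn⟩ : ∃ n : ℕ, q.intValuation r =
      ((Multiplicative.ofAdd (-(n : ℤ)) : Multiplicative ℤ) : ℤₘ₀) :=
    ⟨_, by rw [intValuation_apply, q.intValuationDef_if_neg hr0, WithZero.exp]⟩
  refine ⟨n, ?_, hn⟩
  have hlt : q.intValuation r < 1 := by
    rw [q.intValuation_lt_one_iff_dvd, Ideal.dvd_span_singleton]
    exact hr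
  rw [hn] at hlt
  by_contra h
  push_neg at h
  have hn0 : n = 0 := by omega
  subst hn0
  simp at hlt

open IsDedekindDomain.HeightOneSpectrum in
/-- **The `j`-invariant of the Frey curve at odd multiplicative primes.**
Let `K` be a number field, `p` an odd prime, `(a, b, c)` a non-trivial solution of
`a ^ p + b ^ p + c ^ p = 0` in `𝓞 K`, and `𝔮 ∤ 2` a prime of `𝓞 K` dividing exactly
one of `a`, `b`, `c`. Then the `j`-invariant of the Frey curve
`Y² = X(X − aᵖ)(X + bᵖ)` satisfies `ord_𝔮(j) = −2p · ord_𝔮(abc) < 0`; in particular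
`p ∣ ord_𝔮(j)`. -/
theorem frey_curve_j_valuation_multiplicative_prime (K : Type*) [Field K] [NumberField K]
    (p : ℕ) (hp : p.Prime) (hodd : Odd p)
    (a b c : 𝓞 K) (habc : a * b * c ≠ 0) (hfermat : a ^ p + b ^ p + c ^ p = 0)
    (q : HeightOneSpectrum (𝓞 K)) (hq2 : (2 : 𝓞 K) ∉ q.asIdeal)
    (hone : (a ∈ q.asIdeal ∧ b ∉ q.asIdeal ∧ c ∉ q.asIdeal) ∨
            (a ∉ q.asIdeal ∧ b ∈ q.asIdeal ∧ c ∉ q.asIdeal) ∨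
            (a ∉ q.asIdeal ∧ b ∉ q.asIdeal ∧ c ∈ q.asIdeal))
    (j : K) (hj : j = (algebraMap (𝓞 K) K (16 * (a ^ (2 * p) - b ^ p * c ^ p))) ^ 3 /
      algebraMap (𝓞 K) K (16 * a ^ (2 * p) * b ^ (2 * p) * c ^ (2 * p))) :
    ∃ t : ℤ, ordAt q (algebraMap (𝓞 K) K (a * b * c)) = t ∧
      ordAt q j = ((-(2 * p * t) : ℤ) : WithTop ℤ) ∧
      -(2 * (p : ℤ) * t) < 0 ∧
      (p : ℤ) ∣ -(2 * p * t) := by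
  have hqp : q.asIdeal.IsPrime := q.isPrime
  have ha0 : a ≠ 0 := fun h => habc (by simp [h])
  have hb0 : b ≠ 0 := fun h => habc (by simp [h])
  have hc0 : c ≠ 0 := fun h => habc (by simp [h])
  have hppos : 0 < p := hp.pos
  have h2p : 2 * p ≠ 0 := by omega
  -- 16 ∉ q
  have h16 : (16 : 𝓞 K) ∉ q.asIdeal := by
    intro h
    have h16eq : (16 : 𝓞 K) = 2 ^ 4 := by norm_num
    rw [h16eq] at h
    exact hq2 (hqp.mem_of_pow_mem 4 h)
  have h160 : (16 : 𝓞 K) ≠ 0 := fun h => h16 (h ▸ q.asIdeal.zero_mem)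
  -- the numerator factor is a unit at q
  have hnum : a ^ (2 * p) - b ^ p * c ^ p ∉ q.asIdeal := by
    rcases hone with ⟨ha, hb, hc⟩ | ⟨ha, hb, hc⟩ | ⟨ha, hb, hc⟩
    · intro h
      have hbc : b ^ p * c ^ p ∈ q.asIdeal := by
        have : b ^ p * c ^ p = a ^ (2 * p) - (a ^ (2 * p) - b ^ p * c ^ p) := by ring
        rw [this]
        exact Ideal.sub_mem _ (Ideal.pow_mem_of_mem _ ha _ (by omega)) h
      rcases hqp.mem_or_mem hbc with hm | hm
      · exact hb (hqp.mem_of_pow_mem p hm)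
      · exact hc (hqp.mem_of_pow_mem p hm)
    · intro h
      have haq : a ^ (2 * p) ∈ q.asIdeal := by
        have : a ^ (2 * p) = (a ^ (2 * p) - b ^ p * c ^ p) + b ^ p * c ^ p := by ring
        rw [this]
        exact Ideal.add_mem _ h (Ideal.mul_mem_right _ _ (Ideal.pow_mem_of_mem _ hb _ (by omega)))
      exact ha (hqp.mem_of_pow_mem _ haq)
    · intro h
      have haq : a ^ (2 * p) ∈ q.asIdeal := by
        have : a ^ (2 * p) = (a ^ (2 * p) - b ^ p * c ^ p) + b ^ p * c ^ p := by ring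
        rw [this]
        exact Ideal.add_mem _ h (Ideal.mul_mem_left _ _ (Ideal.pow_mem_of_mem _ hc _ (by omega)))
      exact ha (hqp.mem_of_pow_mem _ haq)
  have hnum0 : a ^ (2 * p) - b ^ p * c ^ p ≠ 0 := fun h => hnum (h ▸ q.asIdeal.zero_mem)
  -- abc ∈ q
  have habcq : a * b * c ∈ q.asIdeal := by
    rcases hone with ⟨ha, _, _⟩ | ⟨_, hb, _⟩ | ⟨_, _, hc⟩
    · exact Ideal.mul_mem_right _ _ (Ideal.mul_mem_right _ _ ha)
    · exact Ideal.mul_mem_right _ _ (Ideal.mul_mem_left _ _ hb)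
    · exact Ideal.mul_mem_left _ _ hc
  obtain ⟨n, hn1, hval⟩ := exists_intValuation_eq_of_mem q habc habcq
  have hinj := IsFractionRing.injective (𝓞 K) K
  have habcK : algebraMap (𝓞 K) K (a * b * c) ≠ 0 :=
    (map_ne_zero_iff _ hinj).mpr habc
  -- valuation of numerator
  have hN : q.intValuation (16 * (a ^ (2 * p) - b ^ p * c ^ p)) = 1 := by
    rw [map_mul, intValuation_eq_one_of_not_mem q h16, intValuation_eq_one_of_not_mem q hnum,
      one_mul]
  -- valuation of denominator
  have hD : q.intValuation (16 * a ^ (2 * p) * b ^ (2 * p) * c ^ (2 * p)) =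
      ((Multiplicative.ofAdd (-(2 * p * n : ℤ)) : Multiplicative ℤ) : ℤₘ₀) := by
    have hre : (16 : 𝓞 K) * a ^ (2 * p) * b ^ (2 * p) * c ^ (2 * p)
        = 16 * (a * b * c) ^ (2 * p) := by ring
    rw [hre, map_mul, map_pow, intValuation_eq_one_of_not_mem q h16, one_mul, hval,
      ← WithZero.coe_pow, WithZero.coe_inj, ← ofAdd_nsmul]
    congr 1
    push_cast
    ring
  refine ⟨(n : ℤ), ?_, ?_, ?_, ?_⟩
  · exact ordAt_eq_of_valuation q habcK (by rw [valuation_of_algebraMap, hval])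
  · have hD0 : (16 : 𝓞 K) * a ^ (2 * p) * b ^ (2 * p) * c ^ (2 * p) ≠ 0 := by
      intro h
      rw [show (16 : 𝓞 K) * a ^ (2 * p) * b ^ (2 * p) * c ^ (2 * p)
        = 16 * (a * b * c) ^ (2 * p) by ring] at h
      exact habc (pow_eq_zero_iff h2p |>.mp ((mul_eq_zero.mp h).resolve_left h160))
    have hj0 : j ≠ 0 := by
      rw [hj]
      exact div_ne_zero (pow_ne_zero _ ((map_ne_zero_iff _ hinj).mpr
        (mul_ne_zero h160 hnum0))) ((map_ne_zero_iff _ hinj).mpr hD0)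
    apply ordAt_eq_of_valuation q hj0
    rw [hj, map_div₀, map_pow, valuation_of_algebraMap, valuation_of_algebraMap, hN, hD,
      one_pow, one_div, ← WithZero.coe_inv, WithZero.coe_inj, ← ofAdd_neg]
  · have hn0 : (0 : ℤ) < n := by exact_mod_cast hn1
    have hp0 : (0 : ℤ) < p := by exact_mod_cast hppos
    nlinarith
  · exact ⟨-(2 * n), by ring⟩
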